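/- Fix a prime p. For every formal power series f ∈ ℚ[[t]] with zero constant term, ℒ_p(ℰ_p(f)) = f. -/

import Mathlib

open PowerSeries

/-- The function `1_p : ℕ → ℤ`: `1_p(n) = 1` if `p ∤ n`, and `1_p(n) = 1 - p` if `p ∣ n`. -/
def onep (p n : ℕ) : ℤ := if p ∣ n then 1 - (p : ℤ) else 1

/-- The function `μ_p : ℕ → ℤ`: `μ_p(n) = μ(n)` if `p ∤ n`, and
`μ_p(n) = μ(m)·(p^s − p^{s−1})` if `n = m·p^s` with `p ∤ m` and `s ≥ 1`. -/
def mup (p n : ℕ) : ℤ :=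
  if p ∣ n then
    (ArithmeticFunction.moebius (n / p ^ (n.factorization p))) *
      ((p : ℤ) ^ (n.factorization p) - (p : ℤ) ^ (n.factorization p - 1))
  else ArithmeticFunction.moebius n

/-- Substitution of `t^m` for `t` in a formal power series: `(substPow m f) = f(t^m)`. -/
noncomputable def substPow (m : ℕ) (f : PowerSeries ℚ) : PowerSeries ℚ :=
  PowerSeries.mk fun n => if m ∣ n then PowerSeries.coeff (n / m) f else 0

/-- The coefficientwise sum `∑_{m=1}^∞ g m` of a family of power series in which the
`m`-th member has order `≥ m`. -/
noncomputable def seriesSum (g : ℕ → PowerSeries ℚ) : PowerSeries ℚ :=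
  PowerSeries.mk fun n => ∑ m ∈ Finset.Icc 1 n, PowerSeries.coeff n (g m)

/-- Formal exponential `exp(h) = ∑_{k≥0} h^k / k!` of a power series `h` with zero
constant term. -/
noncomputable def expS (h : PowerSeries ℚ) : PowerSeries ℚ :=
  PowerSeries.mk fun n =>
    ∑ k ∈ Finset.range (n + 1), (Nat.factorial k : ℚ)⁻¹ * PowerSeries.coeff n (h ^ k)

/-- Formal logarithm `log(1 + h) = ∑_{k≥1} (−1)^{k+1} h^k / k` for a power series `h`
with zero constant term. -/
noncomputable def logS (h : PowerSeries ℚ) : PowerSeries ℚ :=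
  PowerSeries.mk fun n =>
    ∑ k ∈ Finset.Icc 1 n, ((-1 : ℚ) ^ (k + 1) / k) * PowerSeries.coeff n (h ^ k)

/-- The operator `ℰ_p(f) = exp(∑_{m=1}^∞ (1_p(m)/m)·f(t^m))`. -/
noncomputable def calEp (p : ℕ) (f : PowerSeries ℚ) : PowerSeries ℚ :=
  expS (seriesSum fun m => ((onep p m : ℚ) / m) • substPow m f)

/-- The operator `ℒ_p(g) = ∑_{n=1}^∞ (μ_p(n)/n)·log g(t^n)`. -/
noncomputable def calLp (p : ℕ) (g : PowerSeries ℚ) : PowerSeries ℚ :=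
  seriesSum fun n => ((mup p n : ℚ) / n) • logS (substPow n g - 1)

section Aux

lemma coeff_substPow (m : ℕ) (f : PowerSeries ℚ) (n : ℕ) :
    coeff n (substPow m f) = if m ∣ n then coeff (n / m) f else 0 := coeff_mk _ _

lemma coeff_pow_zero {h : PowerSeries ℚ} (hh : constantCoeff h = 0)
    {k n : ℕ} (hn : n < k) : coeff n (h ^ k) = 0 := by
  have hX : (X : PowerSeries ℚ) ^ k ∣ h ^ k := pow_dvd_pow_of_dvd (X_dvd_iff.mpr hh) k
  exact (X_pow_dvd_iff.mp hX) n hn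

lemma substPow_one {m : ℕ} (hm : m ≠ 0) : substPow m 1 = 1 := by
  ext N
  rw [coeff_substPow]
  rcases eq_or_ne N 0 with rfl | hN
  · simp
  · simp only [coeff_one, if_neg hN]
    split_ifs with h h2
    · exfalso; apply hN; rw [← Nat.div_mul_cancel h, h2, zero_mul]
    · rfl
    · rfl

lemma substPow_mul {m : ℕ} (hm : m ≠ 0) (a b : PowerSeries ℚ) :
    substPow m (a * b) = substPow m a * substPow m b := by
  ext N
  have hstep : ∀ x ∈ Finset.HasAntidiagonal.antidiagonal N,
      coeff x.1 (substPow m a) * coeff x.2 (substPow m b) =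
        if m ∣ x.1 ∧ m ∣ x.2 then coeff (x.1 / m) a * coeff (x.2 / m) b else 0 := by
    intro x _
    rw [coeff_substPow, coeff_substPow]
    by_cases hd : m ∣ x.1 ∧ m ∣ x.2
    · rw [if_pos hd, if_pos hd.1, if_pos hd.2]
    · rw [if_neg hd]
      by_cases h1 : m ∣ x.1
      · rw [if_pos h1, if_neg (fun h2 => hd ⟨h1, h2⟩), mul_zero]
      · rw [if_neg h1, zero_mul]
  have hR : coeff N (substPow m a * substPow m b) =
      ∑ x ∈ Finset.HasAntidiagonal.antidiagonal N,
        (if m ∣ x.1 ∧ m ∣ x.2 then coeff (x.1 / m) a * coeff (x.2 / m) b else 0) := by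
    rw [coeff_mul]; exact Finset.sum_congr rfl hstep
  rw [hR, coeff_substPow]
  by_cases hN : m ∣ N
  · rw [if_pos hN, coeff_mul, ← Finset.sum_filter]
    obtain ⟨M, rfl⟩ := hN
    rw [Nat.mul_div_cancel_left _ (Nat.pos_of_ne_zero hm)]
    refine (Finset.sum_bij' (fun (y : ℕ × ℕ) (_ : y ∈ Finset.HasAntidiagonal.antidiagonal M) => (m * y.1, m * y.2))
      (fun (x : ℕ × ℕ) (_ : x ∈ (Finset.HasAntidiagonal.antidiagonal (m * M)).filter
        (fun x => m ∣ x.1 ∧ m ∣ x.2)) => (x.1 / m, x.2 / m)) ?_ ?_ ?_ ?_ ?_)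
    · intro y hy
      simp only [Finset.HasAntidiagonal.mem_antidiagonal] at hy
      simp only [Finset.mem_filter, Finset.HasAntidiagonal.mem_antidiagonal]
      exact ⟨by rw [← Nat.mul_add, hy], Dvd.intro _ rfl, Dvd.intro _ rfl⟩
    · intro x hx
      simp only [Finset.mem_filter, Finset.HasAntidiagonal.mem_antidiagonal] at hx
      obtain ⟨hsum, hd1, hd2⟩ := hx
      simp only [Finset.HasAntidiagonal.mem_antidiagonal]
      obtain ⟨i, hi⟩ := hd1
      obtain ⟨j, hj⟩ := hd2
      rw [hi, hj, Nat.mul_div_cancel_left _ (Nat.pos_of_ne_zero hm),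
        Nat.mul_div_cancel_left _ (Nat.pos_of_ne_zero hm)]
      rw [hi, hj, ← Nat.mul_add] at hsum
      exact Nat.eq_of_mul_eq_mul_left (Nat.pos_of_ne_zero hm) hsum
    · intro y _
      ext <;> simp [Nat.mul_div_cancel_left _ (Nat.pos_of_ne_zero hm)]
    · intro x hx
      simp only [Finset.mem_filter, Finset.HasAntidiagonal.mem_antidiagonal] at hx
      ext <;> simp [Nat.mul_div_cancel' hx.2.1, Nat.mul_div_cancel' hx.2.2]
    · intro y _
      simp [Nat.mul_div_cancel_left _ (Nat.pos_of_ne_zero hm)]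
  · rw [if_neg hN]
    symm
    apply Finset.sum_eq_zero
    intro x hx
    rw [Finset.HasAntidiagonal.mem_antidiagonal] at hx
    rw [if_neg]
    rintro ⟨h1, h2⟩
    exact hN (hx ▸ dvd_add h1 h2)

lemma substPow_pow {m : ℕ} (hm : m ≠ 0) (a : PowerSeries ℚ) (k : ℕ) :
    substPow m (a ^ k) = substPow m a ^ k := by
  induction k with
  | zero => simpa using substPow_one hm
  | succ k ih => rw [pow_succ, pow_succ, substPow_mul hm, ih]

lemma coeff_seriesSum (g : ℕ → PowerSeries ℚ) (n : ℕ) :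
    coeff n (seriesSum g) = ∑ m ∈ Finset.Icc 1 n, coeff n (g m) := coeff_mk _ _

lemma coeff_expS (h : PowerSeries ℚ) (n : ℕ) :
    coeff n (expS h) =
      ∑ k ∈ Finset.range (n + 1), (Nat.factorial k : ℚ)⁻¹ * coeff n (h ^ k) := coeff_mk _ _

lemma coeff_logS (h : PowerSeries ℚ) (n : ℕ) :
    coeff n (logS h) =
      ∑ k ∈ Finset.Icc 1 n, ((-1 : ℚ) ^ (k + 1) / k) * coeff n (h ^ k) := coeff_mk _ _

noncomputable def EN (h : PowerSeries ℚ) (N : ℕ) : PowerSeries ℚ :=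
  ∑ k ∈ Finset.range (N + 1), (Nat.factorial k : ℚ)⁻¹ • h ^ k

noncomputable def LN (u : PowerSeries ℚ) (N : ℕ) : PowerSeries ℚ :=
  ∑ k ∈ Finset.Icc 1 N, ((-1 : ℚ) ^ (k + 1) / k) • u ^ k

lemma coeff_EN (h : PowerSeries ℚ) (N n : ℕ) :
    coeff n (EN h N) =
      ∑ k ∈ Finset.range (N + 1), (Nat.factorial k : ℚ)⁻¹ * coeff n (h ^ k) := by
  rw [EN, map_sum]
  exact Finset.sum_congr rfl fun k _ => by rw [LinearMap.map_smul, smul_eq_mul]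

lemma coeff_LN (u : PowerSeries ℚ) (N n : ℕ) :
    coeff n (LN u N) =
      ∑ k ∈ Finset.Icc 1 N, ((-1 : ℚ) ^ (k + 1) / k) * coeff n (u ^ k) := by
  rw [LN, map_sum]
  exact Finset.sum_congr rfl fun k _ => by rw [LinearMap.map_smul, smul_eq_mul]

lemma coeff_expS_EN {h : PowerSeries ℚ} (hh : constantCoeff h = 0) {n N : ℕ} (hnN : n ≤ N) :
    coeff n (expS h) = coeff n (EN h N) := by
  rw [coeff_expS, coeff_EN]
  apply Finset.sum_subset (Finset.range_subset_range.mpr (by omega))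
  intro k hk hk2
  rw [Finset.mem_range] at hk hk2
  rw [coeff_pow_zero hh (by omega), mul_zero]

lemma coeff_logS_LN {u : PowerSeries ℚ} (hu : constantCoeff u = 0) {n N : ℕ} (hnN : n ≤ N) :
    coeff n (logS u) = coeff n (LN u N) := by
  rw [coeff_logS, coeff_LN]
  apply Finset.sum_subset (Finset.Icc_subset_Icc_right hnN)
  intro k hk hk2
  rw [Finset.mem_Icc] at hk hk2
  rw [coeff_pow_zero hu (by omega), mul_zero]

lemma constantCoeff_expS (h : PowerSeries ℚ) : constantCoeff (expS h) = 1 := by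
  have := coeff_expS h 0
  rw [coeff_zero_eq_constantCoeff] at this
  simpa using this

lemma constantCoeff_logS (h : PowerSeries ℚ) : constantCoeff (logS h) = 0 := by
  have := coeff_logS h 0
  rw [coeff_zero_eq_constantCoeff] at this
  simpa using this

lemma constantCoeff_seriesSum (g : ℕ → PowerSeries ℚ) :
    constantCoeff (seriesSum g) = 0 := by
  have := coeff_seriesSum g 0
  rw [coeff_zero_eq_constantCoeff] at this
  simpa using this

lemma constantCoeff_substPow (m : ℕ) (f : PowerSeries ℚ) :
    constantCoeff (substPow m f) = constantCoeff f := by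
  have := coeff_substPow m f 0
  rw [coeff_zero_eq_constantCoeff] at this
  simpa using this

lemma substPow_expS {n : ℕ} (hn : n ≠ 0) {h : PowerSeries ℚ} (hh : constantCoeff h = 0) :
    substPow n (expS h) = expS (substPow n h) := by
  ext N
  have hterm : ∀ k, coeff N (substPow n h ^ k) =
      if n ∣ N then coeff (N / n) (h ^ k) else 0 := by
    intro k
    rw [← substPow_pow hn, coeff_substPow]
  rw [coeff_substPow]
  by_cases hd : n ∣ N
  · rw [if_pos hd, coeff_expS, coeff_expS]
    have hc : ∀ k ∈ Finset.range (N + 1),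
        (Nat.factorial k : ℚ)⁻¹ * coeff N (substPow n h ^ k) =
          (Nat.factorial k : ℚ)⁻¹ * coeff (N / n) (h ^ k) :=
      fun k _ => by rw [hterm, if_pos hd]
    rw [Finset.sum_congr rfl hc]
    apply Finset.sum_subset (Finset.range_subset_range.mpr
      (by have := Nat.div_le_self N n; omega))
    intro k hk hk2
    rw [Finset.mem_range] at hk hk2
    rw [coeff_pow_zero hh (by omega), mul_zero]
  · rw [if_neg hd, coeff_expS]
    symm
    apply Finset.sum_eq_zero
    intro k _
    rw [hterm, if_neg hd, mul_zero]

lemma eq_of_derivative {a b : PowerSeries ℚ}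
    (h0 : constantCoeff a = constantCoeff b) (hD : d⁄dX ℚ a = d⁄dX ℚ b) : a = b := by
  ext n
  cases n with
  | zero => simpa using h0
  | succ n =>
    have hc := congrArg (coeff n) hD
    rw [coeff_derivative, coeff_derivative] at hc
    have hne : ((n : ℚ) + 1) ≠ 0 := by positivity
    exact mul_right_cancel₀ hne hc

lemma coeff_mul_congr_left {a b c : PowerSeries ℚ} {n : ℕ}
    (h : ∀ i, i ≤ n → coeff i a = coeff i b) :
    coeff n (a * c) = coeff n (b * c) := by
  rw [coeff_mul, coeff_mul]
  refine Finset.sum_congr rfl fun x hx => ?_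
  rw [Finset.HasAntidiagonal.mem_antidiagonal] at hx
  rw [h x.1 (by omega)]

lemma coeff_mul_congr_right {a c c' : PowerSeries ℚ} {n : ℕ}
    (h : ∀ j, j ≤ n → coeff j c = coeff j c') :
    coeff n (a * c) = coeff n (a * c') := by
  rw [mul_comm a c, mul_comm a c']
  exact coeff_mul_congr_left h

lemma D_EN (h : PowerSeries ℚ) (N : ℕ) :
    d⁄dX ℚ (EN h (N + 1)) = EN h N * d⁄dX ℚ h := by
  rw [EN, map_sum]
  have hterm : ∀ k ∈ Finset.range (N + 2),
      d⁄dX ℚ ((Nat.factorial k : ℚ)⁻¹ • h ^ k) =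
        (Nat.factorial k : ℚ)⁻¹ • ((k : ℚ) • (h ^ (k - 1) * d⁄dX ℚ h)) := by
    intro k _
    rw [Derivation.map_smul, Derivation.leibniz_pow, smul_eq_mul,
      ← Nat.cast_smul_eq_nsmul ℚ k]
  rw [Finset.sum_congr rfl hterm]
  rw [Finset.sum_range_succ']
  simp only [Nat.cast_zero, zero_smul, smul_zero, add_zero]
  rw [EN, Finset.sum_mul]
  refine Finset.sum_congr rfl fun i _ => ?_
  rw [smul_mul_assoc, smul_smul, Nat.add_sub_cancel]
  congr 1
  rw [Nat.factorial_succ]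
  push_cast
  rw [mul_inv]
  field_simp

lemma D_expS {h : PowerSeries ℚ} (hh : constantCoeff h = 0) :
    d⁄dX ℚ (expS h) = d⁄dX ℚ h * expS h := by
  ext n
  rw [coeff_derivative, coeff_expS_EN hh (show n + 1 ≤ (n + 1) + 1 by omega),
    ← coeff_derivative, D_EN]
  rw [mul_comm (d⁄dX ℚ h) (expS h)]
  exact coeff_mul_congr_left fun i hi => (coeff_expS_EN hh (by omega)).symm

lemma LN_deriv (u : PowerSeries ℚ) (M : ℕ) :
    (1 + u) * d⁄dX ℚ (LN u M) =
      d⁄dX ℚ u - ((-1 : ℚ) ^ M) • (u ^ M * d⁄dX ℚ u) := by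
  rw [LN, map_sum, Finset.mul_sum]
  have hterm : ∀ k ∈ Finset.Icc 1 M,
      (1 + u) * d⁄dX ℚ (((-1 : ℚ) ^ (k + 1) / k) • u ^ k) =
        ((-1 : ℚ) ^ (k + 1)) • ((1 + u) * (u ^ (k - 1) * d⁄dX ℚ u)) := by
    intro k hk
    rw [Finset.mem_Icc] at hk
    have hk0 : (k : ℚ) ≠ 0 := Nat.cast_ne_zero.mpr (by omega)
    rw [Derivation.map_smul, Derivation.leibniz_pow, smul_eq_mul,
      ← Nat.cast_smul_eq_nsmul ℚ k, smul_smul, div_mul_cancel₀ _ hk0, mul_smul_comm]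
  rw [Finset.sum_congr rfl hterm, ← Finset.Ico_add_one_right_eq_Icc, Finset.sum_Ico_eq_sum_range]
  have hM : M + 1 - 1 = M := by omega
  rw [hM]
  have hstep : ∀ i ∈ Finset.range M,
      ((-1 : ℚ) ^ (1 + i + 1)) • ((1 + u) * (u ^ (1 + i - 1) * d⁄dX ℚ u)) =
        ((-1 : ℚ) ^ i) • (u ^ i * d⁄dX ℚ u) -
          ((-1 : ℚ) ^ (i + 1)) • (u ^ (i + 1) * d⁄dX ℚ u) := by
    intro i _
    have hidx : 1 + i - 1 = i := by omega
    rw [hidx, smul_eq_C_mul, smul_eq_C_mul, smul_eq_C_mul, map_pow, map_pow, map_pow,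
      map_neg, map_one]
    ring
  rw [Finset.sum_congr rfl hstep,
    Finset.sum_range_sub' (fun i => ((-1 : ℚ) ^ i) • (u ^ i * d⁄dX ℚ u)) M]
  simp

lemma D_logS {u : PowerSeries ℚ} (hu : constantCoeff u = 0) :
    (1 + u) * d⁄dX ℚ (logS u) = d⁄dX ℚ u := by
  ext n
  have hc : ∀ j, j ≤ n → coeff j (d⁄dX ℚ (logS u)) = coeff j (d⁄dX ℚ (LN u (n + 1))) := by
    intro j hj
    rw [coeff_derivative, coeff_derivative, coeff_logS_LN hu (show j + 1 ≤ n + 1 by omega)]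
  rw [coeff_mul_congr_right hc, LN_deriv, map_sub]
  have hz : coeff n (((-1 : ℚ) ^ (n + 1)) • (u ^ (n + 1) * d⁄dX ℚ u)) = 0 := by
    rw [LinearMap.map_smul, smul_eq_mul, coeff_mul]
    rw [Finset.sum_eq_zero, mul_zero]
    intro x hx
    rw [Finset.HasAntidiagonal.mem_antidiagonal] at hx
    rw [coeff_pow_zero hu (show x.1 < n + 1 by omega), zero_mul]
  rw [hz, sub_zero]

lemma logS_expS {h : PowerSeries ℚ} (hh : constantCoeff h = 0) :
    logS (expS h - 1) = h := by
  set u := expS h - 1 with hu_def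
  have hu : constantCoeff u = 0 := by
    rw [hu_def, map_sub, constantCoeff_expS, map_one, sub_self]
  have h1u : (1 : PowerSeries ℚ) + u = expS h := by rw [hu_def]; ring
  have hDu : d⁄dX ℚ u = d⁄dX ℚ h * expS h := by
    rw [hu_def, map_sub, Derivation.map_one_eq_zero, sub_zero, D_expS hh]
  have hE : (expS h) ≠ 0 := fun h0 => by
    have := constantCoeff_expS h
    rw [h0, map_zero] at this
    exact zero_ne_one this
  have key : expS h * d⁄dX ℚ (logS u) = expS h * d⁄dX ℚ h := by
    rw [← h1u, D_logS hu, hDu]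
    rw [h1u]
    ring
  have hD : d⁄dX ℚ (logS u) = d⁄dX ℚ h := mul_left_cancel₀ hE key
  exact eq_of_derivative (by rw [constantCoeff_logS, hh]) hD

lemma mup_zero (p : ℕ) : mup p 0 = 0 := by
  simp [mup]

def Zmu (p : ℕ) : ArithmeticFunction ℤ := ⟨fun n => mup p n, mup_zero p⟩

def Zone (p : ℕ) : ArithmeticFunction ℤ :=
  ⟨fun n => if n = 0 then 0 else onep p n, rfl⟩

lemma Zmu_apply (p n : ℕ) : Zmu p n = mup p n := rfl

lemma Zone_apply (p : ℕ) {n : ℕ} (hn : n ≠ 0) : Zone p n = onep p n := if_neg hn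

variable {p : ℕ} (hp : p.Prime)

lemma onep_mul (hp : p.Prime) {m n : ℕ} (hmn : Nat.Coprime m n) :
    onep p (m * n) = onep p m * onep p n := by
  unfold onep
  by_cases h1 : p ∣ m
  · have h2 : ¬ p ∣ n := by
      intro h2
      exact hp.ne_one (Nat.dvd_one.mp (hmn ▸ Nat.dvd_gcd h1 h2))
    rw [if_pos h1, if_neg h2, if_pos (Dvd.dvd.mul_right h1 n), mul_one]
  · by_cases h2 : p ∣ n
    · rw [if_neg h1, if_pos h2, if_pos (Dvd.dvd.mul_left h2 m), one_mul]
    · rw [if_neg h1, if_neg h2, if_neg (fun h => ((hp.dvd_mul).mp h).elim h1 h2), mul_one]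

lemma Zone_mult (hp : p.Prime) : (Zone p).IsMultiplicative := by
  constructor
  · show (if (1 : ℕ) = 0 then (0 : ℤ) else onep p 1) = 1
    rw [if_neg one_ne_zero]
    unfold onep
    rw [if_neg (fun h => hp.ne_one (Nat.dvd_one.mp h))]
  · intro m n hmn
    rcases eq_or_ne m 0 with rfl | hm
    · rw [Nat.coprime_zero_left] at hmn
      subst hmn
      simp [Zone]
    rcases eq_or_ne n 0 with rfl | hn
    · rw [Nat.coprime_zero_right] at hmn
      subst hmn
      simp [Zone]
    rw [Zone_apply p (Nat.mul_ne_zero hm hn), Zone_apply p hm, Zone_apply p hn]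
    exact onep_mul hp hmn

lemma mup_of_not_dvd {n : ℕ} (h : ¬ p ∣ n) : mup p n = ArithmeticFunction.moebius n :=
  if_neg h

lemma mup_of_dvd_aux (hp : p.Prime) {m n : ℕ} (hm : m ≠ 0) (hn : n ≠ 0)
    (hmn : Nat.Coprime m n) (h1 : p ∣ m) (h2 : ¬ p ∣ n) :
    mup p (m * n) = mup p m * mup p n := by
  have hfn : n.factorization p = 0 := Nat.factorization_eq_zero_of_not_dvd h2
  have hfmn : (m * n).factorization p = m.factorization p := by
    rw [Nat.factorization_mul hm hn]
    simp [hfn]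
  have hdvd : p ∣ m * n := Dvd.dvd.mul_right h1 n
  rw [mup, if_pos hdvd, mup, if_pos h1, mup_of_not_dvd h2, hfmn]
  have hoc : (m * n) / p ^ m.factorization p = (m / p ^ m.factorization p) * n := by
    rw [mul_comm m n, Nat.mul_div_assoc n (Nat.ordProj_dvd m p), mul_comm]
  rw [hoc]
  have hcop : Nat.Coprime (m / p ^ m.factorization p) n :=
    Nat.Coprime.coprime_dvd_left (Nat.ordCompl_dvd m p) hmn
  rw [ArithmeticFunction.isMultiplicative_moebius.map_mul_of_coprime hcop]
  ring

lemma Zmu_mult (hp : p.Prime) : (Zmu p).IsMultiplicative := by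
  constructor
  · show mup p 1 = 1
    rw [mup_of_not_dvd (fun h => hp.ne_one (Nat.dvd_one.mp h))]
    simp
  · intro m n hmn
    rcases eq_or_ne m 0 with rfl | hm
    · rw [Nat.coprime_zero_left] at hmn
      subst hmn
      simp [Zmu, mup_zero]
    rcases eq_or_ne n 0 with rfl | hn
    · rw [Nat.coprime_zero_right] at hmn
      subst hmn
      simp [Zmu, mup_zero]
    show mup p (m * n) = mup p m * mup p n
    by_cases h1 : p ∣ m
    · have h2 : ¬ p ∣ n := by
        intro h2
        exact hp.ne_one (Nat.dvd_one.mp (hmn ▸ Nat.dvd_gcd h1 h2))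
      exact mup_of_dvd_aux hp hm hn hmn h1 h2
    · by_cases h2 : p ∣ n
      · rw [mul_comm m n, mul_comm (mup p m)]
        exact mup_of_dvd_aux hp hn hm hmn.symm h2 h1
      · have h3 : ¬ p ∣ m * n := fun h => ((hp.dvd_mul).mp h).elim h1 h2
        rw [mup_of_not_dvd h3, mup_of_not_dvd h1, mup_of_not_dvd h2]
        exact ArithmeticFunction.isMultiplicative_moebius.map_mul_of_coprime hmn

lemma Zone_pp (hp : p.Prime) {q : ℕ} (hq : q.Prime) (j : ℕ) :
    Zone p (q ^ j) = if q = p ∧ 1 ≤ j then 1 - (p : ℤ) else 1 := by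
  rw [Zone_apply p (pow_ne_zero j hq.pos.ne'), onep]
  congr 1
  rw [eq_iff_iff]
  constructor
  · intro h
    rcases Nat.eq_zero_or_pos j with rfl | hj
    · exact absurd (Nat.dvd_one.mp (by simpa using h)) hp.ne_one
    · exact ⟨((Nat.prime_dvd_prime_iff_eq hp hq).mp (hp.dvd_of_dvd_pow h)).symm, hj⟩
  · rintro ⟨rfl, hj⟩
    exact dvd_pow_self q (by omega)

lemma Zmu_pp_ne (hp : p.Prime) {q : ℕ} (hq : q.Prime) (hqp : q ≠ p) (i : ℕ) :
    Zmu p (q ^ i) = ArithmeticFunction.moebius (q ^ i) := by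
  rw [Zmu_apply]
  apply mup_of_not_dvd
  intro h
  rcases Nat.eq_zero_or_pos i with rfl | hi
  · exact hp.ne_one (Nat.dvd_one.mp (by simpa using h))
  · exact hqp ((Nat.prime_dvd_prime_iff_eq hp hq).mp (hp.dvd_of_dvd_pow h)).symm

lemma Zmu_pp_self (hp : p.Prime) {i : ℕ} (hi : 1 ≤ i) :
    Zmu p (p ^ i) = (p : ℤ) ^ i - (p : ℤ) ^ (i - 1) := by
  rw [Zmu_apply, mup, if_pos (dvd_pow_self p (by omega)), hp.factorization_pow,
    Finsupp.single_eq_same, Nat.div_self (Nat.pow_pos (n := i) hp.pos)]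
  simp

lemma Zmu_sum_range (hp : p.Prime) (i : ℕ) (hi : 1 ≤ i) :
    ∑ x ∈ Finset.range i, Zmu p (p ^ x) = (p : ℤ) ^ (i - 1) := by
  induction i with
  | zero => omega
  | succ i ih =>
    rcases Nat.eq_zero_or_pos i with rfl | hipos
    · have h1 : mup p 1 = 1 := by
        rw [mup_of_not_dvd (fun h => hp.ne_one (Nat.dvd_one.mp h))]
        simp
      simpa [Zmu_apply] using h1
    · rw [Finset.sum_range_succ, ih hipos, Zmu_pp_self hp hipos, Nat.add_sub_cancel]
      have hii : i - 1 + 1 = i := by omega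
      rw [← hii, Nat.add_sub_cancel, pow_succ]
      ring

theorem Zmu_mul_Zone (hp : p.Prime) : Zmu p * Zone p = 1 := by
  rw [ArithmeticFunction.IsMultiplicative.eq_iff_eq_on_prime_powers _ ((Zmu_mult hp).mul (Zone_mult hp)) _
    ArithmeticFunction.isMultiplicative_one]
  intro q i hq
  rw [ArithmeticFunction.mul_apply, ArithmeticFunction.one_apply]
  rcases Nat.eq_zero_or_pos i with rfl | hi
  · simp [(Zmu_mult hp).1, (Zone_mult hp).1]
  · rw [if_neg (Nat.one_lt_pow (by omega) hq.one_lt).ne']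
    rw [Nat.sum_divisorsAntidiagonal (fun a b => Zmu p a * Zone p b),
      Nat.sum_divisors_prime_pow hq]
    have hdivpow : ∀ x ∈ Finset.range (i + 1), Zmu p (q ^ x) * Zone p (q ^ i / q ^ x) =
        Zmu p (q ^ x) * Zone p (q ^ (i - x)) := by
      intro x hx
      rw [Finset.mem_range] at hx
      rw [Nat.pow_div (by omega) hq.pos]
    rw [Finset.sum_congr rfl hdivpow]
    by_cases hqp : q = p
    · subst hqp
      rw [Finset.sum_range_succ]
      have hlast : Zmu q (q ^ i) * Zone q (q ^ (i - i)) = (q : ℤ) ^ i - (q : ℤ) ^ (i - 1) := by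
        rw [Nat.sub_self, pow_zero, (Zone_mult hp).1, mul_one, Zmu_pp_self hp hi]
      have hrest : ∀ x ∈ Finset.range i, Zmu q (q ^ x) * Zone q (q ^ (i - x)) =
          Zmu q (q ^ x) * (1 - (q : ℤ)) := by
        intro x hx
        rw [Finset.mem_range] at hx
        rw [Zone_pp hp hq, if_pos ⟨rfl, by omega⟩]
      rw [hlast, Finset.sum_congr rfl hrest, ← Finset.sum_mul, Zmu_sum_range hp i hi]
      have hii : i - 1 + 1 = i := by omega
      rw [← hii, Nat.add_sub_cancel, pow_succ]
      ring
    · have hone : ∀ x ∈ Finset.range (i + 1), Zmu p (q ^ x) * Zone p (q ^ (i - x)) =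
          ((if x = 0 then 1 else 0) + (if x = 1 then -1 else 0) : ℤ) := by
        intro x hx
        rw [Zmu_pp_ne hp hq hqp, Zone_pp hp hq, if_neg (fun h => hqp h.1), mul_one]
        rcases Nat.eq_zero_or_pos x with rfl | hx1
        · simp
        · rw [ArithmeticFunction.moebius_apply_prime_pow hq (by omega)]
          rcases eq_or_ne x 1 with rfl | hx2
          · simp
          · simp [ArithmeticFunction.moebius_apply_prime_pow hq (by omega : x ≠ 0), hx2,
              (by omega : ¬ x = 0), if_neg (by omega : ¬ x = 0)]
      rw [Finset.sum_congr rfl hone, Finset.sum_add_distrib,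
        Finset.sum_ite_eq' (Finset.range (i + 1)) 0 (fun _ => (1 : ℤ)),
        Finset.sum_ite_eq' (Finset.range (i + 1)) 1 (fun _ => (-1 : ℤ))]
      rw [if_pos (Finset.mem_range.mpr (by omega)), if_pos (Finset.mem_range.mpr (by omega))]
      ring

lemma seriesSum_congr {g g' : ℕ → PowerSeries ℚ} (h : ∀ n, 1 ≤ n → g n = g' n) :
    seriesSum g = seriesSum g' := by
  ext N
  rw [coeff_seriesSum, coeff_seriesSum]
  refine Finset.sum_congr rfl fun n hn => ?_
  rw [Finset.mem_Icc] at hn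
  rw [h n hn.1]

lemma sum_Icc_div {r : ℕ} (hr : r ≠ 0) (F : ℕ → ℚ) :
    ∑ m ∈ Finset.Icc 1 r, (if m ∣ r then F m else 0) = ∑ m ∈ r.divisors, F m := by
  have hsub : r.divisors ⊆ Finset.Icc 1 r := by
    intro m hm
    rw [Nat.mem_divisors] at hm
    rw [Finset.mem_Icc]
    have hm0 : m ≠ 0 := by
      intro h0
      exact hr (Nat.eq_zero_of_zero_dvd (h0 ▸ hm.1))
    exact ⟨by omega, Nat.le_of_dvd (Nat.pos_of_ne_zero hr) hm.1⟩
  have h1 : ∑ m ∈ r.divisors, F m = ∑ m ∈ r.divisors, (if m ∣ r then F m else 0) :=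
    Finset.sum_congr rfl fun m hm => by rw [if_pos (Nat.mem_divisors.mp hm).1]
  rw [h1]
  refine (Finset.sum_subset hsub fun x _ hx => ?_).symm
  rw [if_neg fun hd => hx (Nat.mem_divisors.mpr ⟨hd, hr⟩)]

/-- Fix a prime `p`. For every formal power series `f ∈ ℚ[[t]]` with zero constant term,
`ℒ_p(ℰ_p(f)) = f`. -/
theorem calLp_calEp (p : ℕ) (hp : p.Prime) (f : PowerSeries ℚ)
    (hf : PowerSeries.constantCoeff f = 0) : calLp p (calEp p f) = f := by
  set S : PowerSeries ℚ := seriesSum fun m => ((onep p m : ℚ) / m) • substPow m f with hS_def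
  have hS : constantCoeff S = 0 := constantCoeff_seriesSum _
  have step1 : calLp p (calEp p f) =
      seriesSum fun n => ((mup p n : ℚ) / n) • substPow n S := by
    unfold calLp calEp
    apply seriesSum_congr
    intro n hn
    rw [← hS_def, substPow_expS (by omega) hS,
      logS_expS ((constantCoeff_substPow n S).trans hS)]
  rw [step1]
  -- arithmetic functions over ℚ
  set aQ : ArithmeticFunction ℚ := ⟨fun n => (mup p n : ℚ) / n, by simp⟩ with haQ
  set bQ : ArithmeticFunction ℚ := ⟨fun n => (onep p n : ℚ) / n, by simp⟩ with hbQ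
  have hf0 : coeff 0 f = 0 := by rw [coeff_zero_eq_constantCoeff]; exact hf
  set cQ : ArithmeticFunction ℚ := ⟨fun n => coeff n f, hf0⟩ with hcQ
  have hab : aQ * bQ = 1 := by
    ext d
    rw [ArithmeticFunction.mul_apply, ArithmeticFunction.one_apply]
    rcases eq_or_ne d 0 with rfl | hd
    · simp
    have hterm : ∀ x ∈ d.divisorsAntidiagonal,
        aQ x.1 * bQ x.2 = ((mup p x.1 * onep p x.2 : ℤ) : ℚ) / d := by
      intro x hx
      rw [Nat.mem_divisorsAntidiagonal] at hx
      show ((mup p x.1 : ℚ) / x.1) * ((onep p x.2 : ℚ) / x.2) = _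
      rw [div_mul_div_comm, ← Nat.cast_mul, hx.1]
      push_cast
      ring
    rw [Finset.sum_congr rfl hterm, ← Finset.sum_div, ← Int.cast_sum]
    have hz := congrArg (fun F : ArithmeticFunction ℤ => F d) (Zmu_mul_Zone hp)
    simp only [ArithmeticFunction.mul_apply, ArithmeticFunction.one_apply] at hz
    have hzz : ∑ x ∈ d.divisorsAntidiagonal, mup p x.1 * onep p x.2 =
        if d = 1 then 1 else 0 := by
      rw [← hz]
      refine Finset.sum_congr rfl fun x hx => ?_
      rw [Nat.mem_divisorsAntidiagonal] at hx
      have hx2 : x.2 ≠ 0 := by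
        intro h0
        exact hx.2 (by rw [← hx.1, h0, mul_zero])
      show mup p x.1 * onep p x.2 = Zmu p x.1 * Zone p x.2
      show mup p x.1 * onep p x.2 = mup p x.1 * (if x.2 = 0 then 0 else onep p x.2)
      rw [if_neg hx2]
    rw [hzz]
    rcases eq_or_ne d 1 with rfl | hd1
    · simp
    · rw [if_neg hd1, if_neg hd1]
      simp
  have coeff_S : ∀ r : ℕ, r ≠ 0 → coeff r S = (bQ * cQ) r := by
    intro r hr
    have h2 : (bQ * cQ) r = ∑ m ∈ r.divisors, bQ m * cQ (r / m) := by
      rw [ArithmeticFunction.mul_apply]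
      exact Nat.sum_divisorsAntidiagonal (fun a b => bQ a * cQ b)
    rw [h2, hS_def, coeff_seriesSum, ← sum_Icc_div hr fun m => bQ m * cQ (r / m)]
    refine Finset.sum_congr rfl fun m hm => ?_
    rw [LinearMap.map_smul, smul_eq_mul, coeff_substPow]
    show (onep p m : ℚ) / m * (if m ∣ r then coeff (r / m) f else 0) = _
    rw [mul_ite, mul_zero]
    rfl
  ext N
  rcases eq_or_ne N 0 with rfl | hN
  · rw [coeff_zero_eq_constantCoeff_apply, coeff_zero_eq_constantCoeff_apply,
      constantCoeff_seriesSum]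
    exact hf.symm
  rw [coeff_seriesSum]
  have hterm2 : ∀ n ∈ Finset.Icc 1 N,
      coeff N (((mup p n : ℚ) / n) • substPow n S) =
        if n ∣ N then aQ n * (bQ * cQ) (N / n) else 0 := by
    intro n hn
    rw [Finset.mem_Icc] at hn
    rw [LinearMap.map_smul, smul_eq_mul, coeff_substPow, mul_ite, mul_zero]
    by_cases hd : n ∣ N
    · rw [if_pos hd, if_pos hd]
      have hNn : N / n ≠ 0 := by
        have := Nat.le_of_dvd (Nat.pos_of_ne_zero hN) hd
        have := Nat.div_pos this (by omega)
        omega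
      rw [coeff_S _ hNn]
      rfl
    · rw [if_neg hd, if_neg hd]
  rw [Finset.sum_congr rfl hterm2, sum_Icc_div hN fun n => aQ n * (bQ * cQ) (N / n)]
  have h3 : ∑ n ∈ N.divisors, aQ n * (bQ * cQ) (N / n) = (aQ * (bQ * cQ)) N := by
    rw [ArithmeticFunction.mul_apply]
    exact (Nat.sum_divisorsAntidiagonal (fun a b => aQ a * (bQ * cQ) b)).symm
  rw [h3, ← mul_assoc, hab, one_mul]
  rfl

end Aux
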